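/- Fix γ ∈ (0,1) and define m(ρ) = log(1/ρ) / (2(γ − ρ)²) for ρ ∈ (0, min{γ, 1/2}). Then m is strictly convex on the open interval (0, min{γ, 1/2}). -/

import Mathlib

/-- For fixed `γ ∈ (0,1)`, the function
`m(ρ) = log(1/ρ)/(2(γ − ρ)²)` is strictly convex on `(0, min{γ, 1/2})`. -/
theorem strictConvexOn_sampleSizeBound
    (γ : ℝ) (hγ0 : 0 < γ) (hγ1 : γ < 1) :
    StrictConvexOn ℝ (Set.Ioo 0 (min γ (1/2)))
      (fun ρ : ℝ => Real.log (1/ρ) / (2 * (γ - ρ)^2)) := by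
  have hfun : (fun ρ : ℝ => Real.log (1/ρ) / (2 * (γ - ρ)^2))
      = fun ρ : ℝ => (-Real.log ρ) / (2 * (γ - ρ)^2) := by
    funext ρ; rw [one_div, Real.log_inv]
  rw [hfun]
  set f : ℝ → ℝ := fun ρ => (-Real.log ρ) / (2 * (γ - ρ)^2) with hf
  set g : ℝ → ℝ := fun x =>
    (-x⁻¹ * (2 * (γ - x)^2) - (-Real.log x) * (-4 * (γ - x))) / (2 * (γ - x)^2)^2 with hg
  set S : Set ℝ := Set.Ioo 0 (min γ (1/2)) with hS
  have hSopen : IsOpen S := isOpen_Ioo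
  have hmem : ∀ x ∈ S, 0 < x ∧ x < γ ∧ x < 1/2 := by
    rintro x ⟨h1, h2⟩
    exact ⟨h1, lt_of_lt_of_le h2 (min_le_left _ _), lt_of_lt_of_le h2 (min_le_right _ _)⟩
  -- derivative of denominator
  have hden : ∀ x : ℝ, HasDerivAt (fun ρ : ℝ => 2 * (γ - ρ)^2) (-4 * (γ - x)) x := by
    intro x
    have h0 : HasDerivAt (fun ρ : ℝ => γ - ρ) (-1) x := (hasDerivAt_id x).const_sub γ
    have := (h0.pow 2).const_mul 2
    exact this.congr_deriv (by push_cast; ring)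
  have hder : ∀ x ∈ S, HasDerivAt f (g x) x := by
    intro x hx
    obtain ⟨hx0, hxγ, _⟩ := hmem x hx
    have hu : 0 < γ - x := by linarith
    have h1 : HasDerivAt (fun ρ : ℝ => -Real.log ρ) (-x⁻¹) x :=
      (Real.hasDerivAt_log hx0.ne').neg
    exact h1.div (hden x) (by positivity)
  have hder2 : ∀ x ∈ S, 0 < deriv g x := by
    intro x hx
    obtain ⟨hx0, hxγ, hx12⟩ := hmem x hx
    have hu : 0 < γ - x := by linarith
    -- derivative of numerator of g
    have hA : HasDerivAt (fun x : ℝ => -x⁻¹ * (2 * (γ - x)^2))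
        ((x^2)⁻¹ * (2 * (γ - x)^2) + (-x⁻¹) * (-4 * (γ - x))) x := by
      have := (hasDerivAt_inv hx0.ne').neg.mul (hden x)
      exact this.congr_deriv (by simp only [Pi.neg_apply]; ring)
    have hB2 : HasDerivAt (fun x : ℝ => -4 * (γ - x)) 4 x := by
      have := ((hasDerivAt_id x).const_sub γ).const_mul (-4)
      exact this.congr_deriv (by ring)
    have hB : HasDerivAt (fun x : ℝ => (-Real.log x) * (-4 * (γ - x)))
        ((-x⁻¹) * (-4 * (γ - x)) + (-Real.log x) * 4) x :=
      ((Real.hasDerivAt_log hx0.ne').neg).mul hB2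
    have hN : HasDerivAt (fun x : ℝ => -x⁻¹ * (2 * (γ - x)^2) - (-Real.log x) * (-4 * (γ - x)))
        (((x^2)⁻¹ * (2 * (γ - x)^2) + (-x⁻¹) * (-4 * (γ - x)))
          - ((-x⁻¹) * (-4 * (γ - x)) + (-Real.log x) * 4)) x := hA.sub hB
    have hD : HasDerivAt (fun x : ℝ => (2 * (γ - x)^2)^2)
        (2 * (2 * (γ - x)^2)^1 * (-4 * (γ - x))) x := by
      have := (hden x).pow 2
      exact this.congr_deriv (by push_cast; ring)
    have hDx : ((2 * (γ - x)^2)^2 : ℝ) ≠ 0 := by positivity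
    have hgd : HasDerivAt g
        (((((x^2)⁻¹ * (2 * (γ - x)^2) + (-x⁻¹) * (-4 * (γ - x)))
          - ((-x⁻¹) * (-4 * (γ - x)) + (-Real.log x) * 4)) * (2 * (γ - x)^2)^2
          - (-x⁻¹ * (2 * (γ - x)^2) - (-Real.log x) * (-4 * (γ - x)))
            * (2 * (2 * (γ - x)^2)^1 * (-4 * (γ - x)))) / ((2 * (γ - x)^2)^2)^2) x :=
      hN.div hD hDx
    rw [hgd.deriv]
    -- key inequality
    have hlogx : Real.log x < -Real.log 2 := by
      have h1 : Real.log x < Real.log (1/2) := Real.log_lt_log hx0 hx12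
      rwa [one_div, Real.log_inv] at h1
    have hlog2 : (0.6931471803 : ℝ) < Real.log 2 := Real.log_two_gt_d9
    have hx2 : (0:ℝ) < x^2 := by positivity
    have hprod : x^2 * Real.log x < x^2 * (-Real.log 2) :=
      (mul_lt_mul_iff_right₀ hx2).mpr hlogx
    have key : 0 < (γ - x)^2 - 4 * (γ - x) * x - 6 * x^2 * Real.log x := by
      nlinarith [sq_nonneg (γ - 3*x), hprod, hlog2, hx2]
    have hnum : ((((x^2)⁻¹ * (2 * (γ - x)^2) + (-x⁻¹) * (-4 * (γ - x)))
          - ((-x⁻¹) * (-4 * (γ - x)) + (-Real.log x) * 4)) * (2 * (γ - x)^2)^2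
          - (-x⁻¹ * (2 * (γ - x)^2) - (-Real.log x) * (-4 * (γ - x)))
            * (2 * (2 * (γ - x)^2)^1 * (-4 * (γ - x))))
        = 8 * (γ - x)^4 * ((γ - x)^2 - 4 * (γ - x) * x - 6 * x^2 * Real.log x) / x^2 := by
      field_simp
      ring
    rw [hnum]
    positivity
  apply strictConvexOn_of_deriv2_pos (convex_Ioo _ _)
  · intro x hx
    exact (hder x hx).differentiableAt.continuousAt.continuousWithinAt
  · intro x hx
    rw [interior_Ioo] at hx
    have hEq : deriv f =ᶠ[nhds x] g :=
      Filter.eventuallyEq_of_mem (hSopen.mem_nhds hx) (fun y hy => (hder y hy).deriv)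
    have : deriv^[2] f x = deriv (deriv f) x := by
      simp [Function.iterate_succ, Function.iterate_zero, Function.comp]
    rw [this, hEq.deriv_eq]
    exact hder2 x hx
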